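/- Let G be a finite group with |G| ≥ 3. Then the set of elasticities {ρ(L(A)) : A ∈ B(G)} equals {q ∈ ℚ : 1 ≤ q ≤ D(G)/2}. -/

import Mathlib

namespace ProductOne

open scoped Classical

variable {G : Type*} [Group G]

/-- `S` is a product-one sequence over `G`: its terms can be ordered with product `1`. -/
def IsProductOne (S : Multiset G) : Prop :=
  ∃ l : List G, (l : Multiset G) = S ∧ l.prod = 1

/-- `S` is an atom (a minimal product-one sequence): it is a nontrivial product-one
sequence that is not the concatenation of two nontrivial product-one sequences. -/
def IsAtomSeq (S : Multiset G) : Prop :=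
  S ≠ 0 ∧ IsProductOne S ∧
    ∀ A B : Multiset G, S = A + B → IsProductOne A → IsProductOne B → A = 0 ∨ B = 0

/-- `S` is a sequence over the subset `G₀ ⊆ G`. -/
def SeqOn (G₀ : Set G) (S : Multiset G) : Prop := ∀ g ∈ S, g ∈ G₀

/-- `S` is an atom of the monoid `B(G₀)` of product-one sequences over `G₀`. -/
def IsAtomSeqOn (G₀ : Set G) (S : Multiset G) : Prop := SeqOn G₀ S ∧ IsAtomSeq S

/-- The set of lengths `L(A)` of factorizations of `A` into atoms over `G₀`. -/
def lengthsOn (G₀ : Set G) (A : Multiset G) : Set ℕ :=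
  {k | ∃ f : Multiset (Multiset G), Multiset.card f = k ∧
        (∀ U ∈ f, IsAtomSeqOn G₀ U) ∧ f.sum = A}

/-- The set of lengths `L(A)` over the whole group. -/
def lengths (A : Multiset G) : Set ℕ := lengthsOn Set.univ A

/-- The set of distances of a set `L ⊆ ℕ`. -/
def distancesOf (L : Set ℕ) : Set ℕ :=
  {d | 0 < d ∧ ∃ a, a ∈ L ∧ a + d ∈ L ∧ ∀ b ∈ L, ¬(a < b ∧ b < a + d)}

/-- The set of distances `Δ(G₀)` of the monoid `B(G₀)`. -/
def DeltaOn (G₀ : Set G) : Set ℕ :=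
  {d | ∃ A : Multiset G, SeqOn G₀ A ∧ IsProductOne A ∧ d ∈ distancesOf (lengthsOn G₀ A)}

/-- The set of distances `Δ(G)` of `B(G)`. -/
def Delta (G : Type*) [Group G] : Set ℕ := DeltaOn (Set.univ : Set G)

/-- The large Davenport constant of `G₀`: maximal length of an atom of `B(G₀)`. -/
noncomputable def DavenportOn (G₀ : Set G) : ℕ :=
  sSup {k | ∃ S : Multiset G, IsAtomSeqOn G₀ S ∧ Multiset.card S = k}

/-- The large Davenport constant `D(G)`. -/
noncomputable def Davenport (G : Type*) [Group G] : ℕ :=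
  DavenportOn (Set.univ : Set G)

/-- The small Davenport constant `d(G₀)`: maximal length of a product-one free
sequence over `G₀`. -/
noncomputable def smallDavenportOn (G₀ : Set G) : ℕ :=
  sSup {k | ∃ S : Multiset G, SeqOn G₀ S ∧ Multiset.card S = k ∧
        ∀ T : Multiset G, T ≤ S → T ≠ 0 → ¬IsProductOne T}

/-- `Δ*(G) = {min Δ(G₀) : G₀ ⊆ G with Δ(G₀) ≠ ∅}`. -/
def DeltaStar (G : Type*) [Group G] : Set ℕ :=
  {d | ∃ G₀ : Set G, (DeltaOn G₀).Nonempty ∧ d = sInf (DeltaOn G₀)}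

/-- The elasticity `ρ(L) = max L / min L` of a set of lengths (with the set of
positive elements used, and `ρ = 1` if there are none). -/
noncomputable def elasticity (L : Set ℕ) : ℚ :=
  if (L ∩ {k | 0 < k}).Nonempty then
    ((sSup (L ∩ {k | 0 < k}) : ℕ) : ℚ) / ((sInf (L ∩ {k | 0 < k}) : ℕ) : ℚ)
  else 1

/-- The elasticity `ρ(G₀)` of the monoid `B(G₀)`. -/
noncomputable def rhoOn (G₀ : Set G) : ℝ :=
  sSup {x : ℝ | ∃ A : Multiset G, SeqOn G₀ A ∧ IsProductOne A ∧
    x = (elasticity (lengthsOn G₀ A) : ℝ)}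

/-- `Δ*_ρ(G) = {min Δ(G₀) : G₀ ⊆ G with ρ(G₀) = D(G)/2}`. -/
noncomputable def DeltaRhoStar (G : Type*) [Group G] : Set ℕ :=
  {d | ∃ G₀ : Set G, rhoOn G₀ = (Davenport G : ℝ) / 2 ∧ d = sInf (DeltaOn G₀)}

/-- Divisibility in the monoid `B(G)`. -/
def BDvd (A S : Multiset G) : Prop :=
  ∃ C : Multiset G, IsProductOne C ∧ S = A + C

/-- The `ω`-invariant `ω(B(G), A)`. -/
noncomputable def omegaAt (A : Multiset G) : ℕ∞ :=
  sInf {N : ℕ∞ | ∀ f : Multiset (Multiset G),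
    (∀ B ∈ f, IsProductOne B) → BDvd A f.sum →
    ∃ t ≤ f, (Multiset.card t : ℕ∞) ≤ N ∧ BDvd A t.sum}

/-- `ω(G) = sup {ω(B(G), U) : U an atom of B(G)}`. -/
noncomputable def omegaInv (G : Type*) [Group G] : ℕ∞ :=
  ⨆ U ∈ {U : Multiset G | IsAtomSeq U}, omegaAt U

/-- `z` is a factorization of `A` into atoms. -/
def IsFactorization (A : Multiset G) (z : Multiset (Multiset G)) : Prop :=
  (∀ U ∈ z, IsAtomSeq U) ∧ z.sum = A

/-- The distance between two factorizations. -/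
noncomputable def factDist (z z' : Multiset (Multiset G)) : ℕ :=
  letI := Classical.decEq (Multiset G)
  max (Multiset.card (z - z')) (Multiset.card (z' - z))

/-- The catenary degree `c(A)`. -/
noncomputable def catenaryAt (A : Multiset G) : ℕ∞ :=
  sInf {N : ℕ∞ | ∀ z z' : Multiset (Multiset G),
    IsFactorization A z → IsFactorization A z' →
    Relation.ReflTransGen
      (fun x y => IsFactorization A y ∧ (factDist x y : ℕ∞) ≤ N) z z'}

/-- The set of positive catenary degrees `Ca(G)`. -/
noncomputable def CatenarySet (G : Type*) [Group G] : Set ℕ∞ :=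
  {c | ∃ A : Multiset G, IsProductOne A ∧ catenaryAt A = c ∧ 0 < c}

/-- The catenary degree `c(G)` of `B(G)`. -/
noncomputable def catenaryDegree (G : Type*) [Group G] : ℕ∞ :=
  ⨆ A ∈ {A : Multiset G | IsProductOne A}, catenaryAt A

/-- The cross number `k(S)` of a sequence. -/
noncomputable def crossNumber (S : Multiset G) : ℚ :=
  (S.map fun g => (1 : ℚ) / (orderOf g : ℚ)).sum

/-- The system of sets of lengths `L(G)`. -/
def LSystem (G : Type*) [Group G] : Set (Set ℕ) :=
  {L | ∃ A : Multiset G, IsProductOne A ∧ L = lengths A}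

/-- The set of products `π(S)` of all orderings of the terms of `S`. -/
def piSet (S : Multiset G) : Set G :=
  {g | ∃ l : List G, (l : Multiset G) = S ∧ l.prod = g}

/-- The sumset `{x₁, -x₁} + ⋯ + {x_s, -x_s}` for a sequence `a = x₁ ⋯ x_s`. -/
def signedSums {α : Type*} [AddCommGroup α] (a : Multiset α) : Set α :=
  {z | ∃ t ≤ a, z = t.sum + t.sum - a.sum}

/-- `Σ_k(T)`: the set of sums of `k`-term subsequences of `T`. -/
def subseqSums {α : Type*} [AddCommMonoid α] (k : ℕ) (T : Multiset α) : Set α :=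
  {z | ∃ t ≤ T, Multiset.card t = k ∧ t.sum = z}

/-- The subsequence `S_X` of all terms of `S` lying in `X`. -/
noncomputable def restrictTo (X : Set G) (S : Multiset G) : Multiset G :=
  letI := Classical.decPred fun g => g ∈ X
  S.filter fun g => g ∈ X

/-- The maximum multiplicity `h(S)` of a term of `S`. -/
noncomputable def maxMultiplicity {α : Type*} (S : Multiset α) : ℕ :=
  letI := Classical.decEq α
  S.toFinset.sup S.count

end ProductOne

namespace ProductOneAux

open ProductOne Multiset
open scoped Classical

variable {G : Type*} [Group G]

theorem prodOne_zero : IsProductOne (0 : Multiset G) := ⟨[], rfl, rfl⟩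

theorem prodOne_add {A B : Multiset G} (hA : IsProductOne A) (hB : IsProductOne B) :
    IsProductOne (A + B) := by
  obtain ⟨l, hl, hp⟩ := hA
  obtain ⟨m, hm, hq⟩ := hB
  exact ⟨l ++ m, by simp [← hl, ← hm], by rw [List.prod_append, hp, hq, one_mul]⟩

theorem prodOne_nsmul {A : Multiset G} (hA : IsProductOne A) (n : ℕ) :
    IsProductOne (n • A) := by
  induction n with
  | zero => rw [zero_nsmul]; exact prodOne_zero
  | succ k ih => rw [succ_nsmul]; exact prodOne_add ih hA

theorem prodOne_singleton {g : G} : IsProductOne ({g} : Multiset G) ↔ g = 1 := by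
  constructor
  · rintro ⟨l, hl, hp⟩
    rw [Multiset.coe_eq_singleton] at hl
    subst hl; simpa using hp
  · rintro rfl
    exact ⟨[1], rfl, by simp⟩

theorem prodOne_replicate_one (m : ℕ) : IsProductOne (Multiset.replicate m (1 : G)) :=
  ⟨List.replicate m 1, by rw [Multiset.coe_replicate], by rw [List.prod_replicate, one_pow]⟩

theorem prodOne_pair {x y : G} : IsProductOne ({x, y} : Multiset G) ↔ x * y = 1 := by
  constructor
  · rintro ⟨l, hl, hp⟩
    have hlen : l.length = 2 := by
      have := congrArg Multiset.card hl
      simpa using this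
    obtain ⟨c, d, rfl⟩ := List.length_eq_two.mp hlen
    have h2 : (c ::ₘ d ::ₘ 0 : Multiset G) = x ::ₘ y ::ₘ 0 := by
      exact hl
    have hcd : c * d = 1 := by simpa using hp
    rw [Multiset.cons_eq_cons] at h2
    rcases h2 with ⟨rfl, h⟩ | ⟨hne, cs, h1', h2'⟩
    · have : d = y := by simpa using h
      subst this; exact hcd
    · have hcs : cs = 0 := by
        have := congrArg Multiset.card h1'
        simp at this
        exact this
      subst hcs
      have hd : d = x := by simpa using h1'
      have hy : y = c := by simpa using h2'
      rw [hy, ← hd, eq_inv_of_mul_eq_one_left hcd]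
      simp
  · intro h
    exact ⟨[x, y], rfl, by simp [← mul_assoc, h]⟩

theorem prodOne_map_inv {S : Multiset G} (h : IsProductOne S) :
    IsProductOne (S.map fun g => g⁻¹) := by
  obtain ⟨l, hl, hp⟩ := h
  refine ⟨(l.map fun x => x⁻¹).reverse, ?_, ?_⟩
  · rw [← hl]; simp
  · rw [← List.prod_inv_reverse, hp, inv_one]

theorem atom_one : IsAtomSeq ({1} : Multiset G) := by
  refine ⟨by simp, prodOne_singleton.mpr rfl, ?_⟩
  intro A B hAB _ _
  have h1 : Multiset.card A + Multiset.card B = 1 := by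
    have := congrArg Multiset.card hAB
    simpa using this.symm
  rcases (by omega : Multiset.card A = 0 ∨ Multiset.card B = 0) with h | h
  · exact Or.inl (Multiset.card_eq_zero.mp h)
  · exact Or.inr (Multiset.card_eq_zero.mp h)

theorem atom_eq_of_one_mem {S : Multiset G} (h : IsAtomSeq S) (h1 : (1 : G) ∈ S) :
    S = {1} := by
  obtain ⟨hne, ⟨l, hl, hp⟩, hmin⟩ := h
  have h1l : (1 : G) ∈ l := by rw [← Multiset.mem_coe, hl]; exact h1
  obtain ⟨s, t, rfl⟩ := List.append_of_mem h1l
  have hprod : (s ++ t).prod = 1 := by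
    rw [List.prod_append] at hp ⊢
    simpa using hp
  have hS : S = {1} + ↑(s ++ t) := by
    rw [← hl, Multiset.singleton_add, Multiset.cons_coe, Multiset.coe_eq_coe]
    exact List.perm_middle
  rcases hmin {1} ↑(s ++ t) hS (prodOne_singleton.mpr rfl) ⟨s ++ t, rfl, hprod⟩ with h | h
  · simp at h
  · rw [hS, h, add_zero]

theorem one_not_mem_atom {S : Multiset G} (h : IsAtomSeq S) (h2 : 2 ≤ Multiset.card S) :
    (1 : G) ∉ S := fun h1 => by
  rw [atom_eq_of_one_mem h h1] at h2
  simp at h2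

theorem atom_card_one {S : Multiset G} (hS : IsAtomSeq S) (h : Multiset.card S = 1) :
    S = {1} := by
  obtain ⟨x, rfl⟩ := Multiset.card_eq_one.mp h
  rw [prodOne_singleton.mp hS.2.1]

theorem two_le_card_atom {S : Multiset G} (hS : IsAtomSeq S) (h : S ≠ {1}) :
    2 ≤ Multiset.card S := by
  have h0 : Multiset.card S ≠ 0 := fun hc => hS.1 (Multiset.card_eq_zero.mp hc)
  have h1 : Multiset.card S ≠ 1 := fun hc => h (atom_card_one hS hc)
  omega

theorem atom_pair {g : G} (hg : g ≠ 1) : IsAtomSeq ({g, g⁻¹} : Multiset G) := by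
  refine ⟨by simp, prodOne_pair.mpr (mul_inv_cancel g), ?_⟩
  intro A B hAB hA hB
  by_contra hc
  push_neg at hc
  obtain ⟨hA0, hB0⟩ := hc
  have hcard : Multiset.card A + Multiset.card B = 2 := by
    have := congrArg Multiset.card hAB
    simpa [Multiset.insert_eq_cons] using this.symm
  have hApos : 0 < Multiset.card A := Multiset.card_pos.mpr hA0
  have hBpos : 0 < Multiset.card B := Multiset.card_pos.mpr hB0
  have hA1 : Multiset.card A = 1 := by omega
  obtain ⟨x, rfl⟩ := Multiset.card_eq_one.mp hA1
  have hx1 : x = 1 := prodOne_singleton.mp hA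
  have hxmem : x ∈ ({g, g⁻¹} : Multiset G) := by
    rw [hAB]; simp
  rcases Multiset.mem_cons.mp hxmem with rfl | hx
  · exact hg hx1
  · have hxg : x = g⁻¹ := by simpa using hx
    have : g⁻¹ = 1 := by rw [← hxg, hx1]
    exact hg (inv_eq_one.mp this)

theorem atom_map_inv {S : Multiset G} (h : IsAtomSeq S) :
    IsAtomSeq (S.map fun g => g⁻¹) := by
  obtain ⟨h0, h1, hmin⟩ := h
  refine ⟨by simpa using h0, prodOne_map_inv h1, ?_⟩
  intro A B hAB hA hB
  have hS : S = (A.map fun g => g⁻¹) + (B.map fun g => g⁻¹) := by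
    have := congrArg (Multiset.map fun g : G => g⁻¹) hAB
    simpa [Multiset.map_map, Function.comp_def] using this
  rcases hmin _ _ hS (prodOne_map_inv hA) (prodOne_map_inv hB) with h | h
  · exact Or.inl (by simpa using h)
  · exact Or.inr (by simpa using h)

theorem not_atom_of_prefix_eq {l : List G} (hp : l.prod = 1) {i j : ℕ} (hij : i < j)
    (hj : j < l.length) (hpr : (l.take i).prod = (l.take j).prod) :
    ¬ IsAtomSeq (↑l : Multiset G) := by
  rintro ⟨-, -, hmin⟩
  set seg := (l.drop i).take (j - i) with hseg
  set rest := l.take i ++ l.drop j with hrest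
  have htj : l.take j = l.take i ++ seg := by
    have h : l.take (i + (j - i)) = l.take i ++ (l.drop i).take (j - i) := List.take_add
    rwa [show i + (j - i) = j by omega] at h
  have hsegprod : seg.prod = 1 := by
    have h : (l.take j).prod = (l.take i).prod * seg.prod := by rw [htj, List.prod_append]
    rw [← hpr] at h
    exact (left_eq_mul.mp h)
  have hrestprod : rest.prod = 1 := by
    rw [hrest, List.prod_append, hpr, List.prod_take_mul_prod_drop, hp]
  have hseglen : seg.length = j - i := by
    rw [hseg, List.length_take, List.length_drop]
    omega
  have hsegne : seg ≠ [] := by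
    intro h
    rw [h] at hseglen
    simp at hseglen
    omega
  have hrestne : rest ≠ [] := by
    intro h
    have := congrArg List.length h
    simp [hrest] at this
    omega
  have hsplit : (↑l : Multiset G) = ↑seg + ↑rest := by
    conv_lhs => rw [show l = (l.take i ++ seg) ++ l.drop j by rw [← htj, List.take_append_drop]]
    rw [hrest]
    simp only [← Multiset.coe_add]
    abel
  rcases hmin (↑seg) (↑rest) hsplit ⟨seg, rfl, hsegprod⟩ ⟨rest, rfl, hrestprod⟩ with h | h
  · exact hsegne (by rwa [Multiset.coe_eq_zero] at h)
  · exact hrestne (by rwa [Multiset.coe_eq_zero] at h)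

theorem atom_card_le [Finite G] {S : Multiset G} (h : IsAtomSeq S) :
    Multiset.card S ≤ Nat.card G := by
  by_contra hlt
  push_neg at hlt
  obtain ⟨l, hl, hp⟩ := h.2.1
  classical
  letI : Fintype G := Fintype.ofFinite G
  have hlen : Fintype.card G < l.length := by
    rw [← Nat.card_eq_fintype_card]
    calc Nat.card G < Multiset.card S := hlt
      _ = l.length := by rw [← hl]; simp
  obtain ⟨u, v, huv, heq⟩ := Fintype.exists_ne_map_eq_of_card_lt
    (fun i : Fin l.length => (l.take (i : ℕ)).prod) (by simpa using hlen)
  have hS : IsAtomSeq (↑l : Multiset G) := by rw [hl]; exact h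
  have hne : (u : ℕ) ≠ (v : ℕ) := fun hh => huv (Fin.ext hh)
  rcases hne.lt_or_gt with hlt' | hlt'
  · exact not_atom_of_prefix_eq hp hlt' v.isLt heq hS
  · exact not_atom_of_prefix_eq hp hlt' u.isLt heq.symm hS

theorem isAtomSeqOn_univ {S : Multiset G} : IsAtomSeqOn Set.univ S ↔ IsAtomSeq S :=
  ⟨fun h => h.2, fun h => ⟨fun g _ => Set.mem_univ g, h⟩⟩

theorem davenport_eq (G : Type*) [Group G] :
    Davenport G = sSup {k | ∃ S : Multiset G, IsAtomSeq S ∧ Multiset.card S = k} := by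
  unfold Davenport DavenportOn
  congr 1
  ext k
  exact exists_congr fun S => and_congr_left' isAtomSeqOn_univ

theorem davSet_bdd [Finite G] :
    BddAbove {k | ∃ S : Multiset G, IsAtomSeq S ∧ Multiset.card S = k} :=
  ⟨Nat.card G, fun k hk => by obtain ⟨S, hS, rfl⟩ := hk; exact atom_card_le hS⟩

theorem davSet_nonempty :
    {k | ∃ S : Multiset G, IsAtomSeq S ∧ Multiset.card S = k}.Nonempty :=
  ⟨1, {1}, atom_one, by simp⟩

theorem davenport_spec (G : Type*) [Group G] [Finite G] :
    ∃ U : Multiset G, IsAtomSeq U ∧ Multiset.card U = Davenport G := by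
  rw [davenport_eq]
  obtain ⟨S, hS, hk⟩ := Nat.sSup_mem (davSet_nonempty (G := G)) (davSet_bdd (G := G))
  exact ⟨S, hS, hk⟩

theorem atom_card_le_dav [Finite G] {S : Multiset G} (h : IsAtomSeq S) :
    Multiset.card S ≤ Davenport G := by
  rw [davenport_eq]
  exact le_csSup davSet_bdd ⟨S, h, rfl⟩

theorem orderOf_dvd_of_prodOne_replicate {g : G} {k : ℕ}
    (h : IsProductOne (Multiset.replicate k g)) : orderOf g ∣ k := by
  obtain ⟨l, hl, hp⟩ := h
  have hrep : l = List.replicate k g := by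
    rw [List.eq_replicate_iff]
    constructor
    · have := congrArg Multiset.card hl; simpa using this
    · intro b hb
      exact Multiset.eq_of_mem_replicate (hl ▸ Multiset.mem_coe.mpr hb)
  subst hrep
  rw [List.prod_replicate] at hp
  exact orderOf_dvd_of_pow_eq_one hp

theorem atom_replicate_orderOf [Finite G] {g : G} (hg : g ≠ 1) :
    IsAtomSeq (Multiset.replicate (orderOf g) g) := by
  have hpos : 0 < orderOf g := orderOf_pos g
  refine ⟨by intro hh; rw [← Multiset.card_eq_zero, Multiset.card_replicate] at hh; omega,
    ⟨List.replicate (orderOf g) g, by rw [Multiset.coe_replicate],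
      by rw [List.prod_replicate, pow_orderOf_eq_one]⟩, ?_⟩
  intro A B hAB hA hB
  have hAle : A ≤ Multiset.replicate (orderOf g) g := hAB ▸ le_add_right A B
  have hrepA : A = Multiset.replicate (Multiset.card A) g := by
    rw [Multiset.eq_replicate_card]
    intro b hb
    exact Multiset.eq_of_mem_replicate (Multiset.mem_of_le hAle hb)
  have hdA : orderOf g ∣ Multiset.card A :=
    orderOf_dvd_of_prodOne_replicate (by rwa [hrepA] at hA)
  have hsum : Multiset.card A + Multiset.card B = orderOf g := by
    have := congrArg Multiset.card hAB
    simpa using this.symm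
  rcases Nat.eq_zero_or_pos (Multiset.card A) with h0 | hposA
  · exact Or.inl (Multiset.card_eq_zero.mp h0)
  · have h1 : orderOf g ≤ Multiset.card A := Nat.le_of_dvd hposA hdA
    have h2 : Multiset.card B = 0 := by omega
    exact Or.inr (Multiset.card_eq_zero.mp h2)

theorem isAtomSeq_of_min {S : Multiset G} (h0 : S ≠ 0) (h1 : IsProductOne S)
    (h : ∀ T : Multiset G, T ≤ S → T ≠ 0 → T ≠ S → ¬IsProductOne T) : IsAtomSeq S := by
  refine ⟨h0, h1, ?_⟩
  intro A B hAB hA hB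
  by_contra hc
  push_neg at hc
  obtain ⟨hA0, hB0⟩ := hc
  refine h A (hAB ▸ le_add_right A B) hA0 ?_ hA
  intro hAS
  rw [hAS] at hAB
  exact hB0 ((left_eq_add).mp hAB)

theorem exists_atom_big [Finite G] (hG : 3 ≤ Nat.card G) :
    ∃ S : Multiset G, IsAtomSeq S ∧ 3 ≤ Multiset.card S := by
  classical
  by_cases hord : ∃ g : G, 3 ≤ orderOf g
  · obtain ⟨g, hgo⟩ := hord
    have hg1 : g ≠ 1 := by
      intro h
      rw [h, orderOf_one] at hgo
      omega
    exact ⟨_, atom_replicate_orderOf hg1, by rw [Multiset.card_replicate]; exact hgo⟩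
  · push_neg at hord
    have hsq : ∀ x : G, x * x = 1 := by
      intro x
      have h2 : orderOf x ≤ 2 := by have := hord x; omega
      have hpos : 0 < orderOf x := orderOf_pos x
      have hd : orderOf x ∣ 2 := by
        rcases (by omega : orderOf x = 1 ∨ orderOf x = 2) with h | h <;> simp [h]
      have hpow := orderOf_dvd_iff_pow_eq_one.mp hd
      rwa [pow_two] at hpow
    have hinv : ∀ x : G, x⁻¹ = x := fun x => inv_eq_of_mul_eq_one_right (hsq x)
    have : Nontrivial G := Finite.one_lt_card_iff_nontrivial.mp (by omega)
    obtain ⟨a, ha⟩ := exists_ne (1 : G)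
    obtain ⟨b, hb1, hba⟩ : ∃ b : G, b ≠ 1 ∧ b ≠ a := by
      by_contra hcon
      push_neg at hcon
      classical
      letI : Fintype G := Fintype.ofFinite G
      have hsub : (Finset.univ : Finset G) ⊆ {1, a} := by
        intro x _
        rcases eq_or_ne x 1 with h | h
        · simp [h]
        · simp [hcon x h]
      have hcard : Fintype.card G ≤ 2 := by
        calc Fintype.card G ≤ ({1, a} : Finset G).card := Finset.card_le_card hsub
          _ ≤ 2 := Finset.card_insert_le _ _ |>.trans (by simp)
      rw [← Nat.card_eq_fintype_card] at hcard
      omega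
    have hab1 : a * b ≠ 1 := by
      intro h
      exact hba ((eq_inv_of_mul_eq_one_right h).trans (hinv a))
    have haab : a ≠ a * b := by
      intro h
      have : b = 1 := by
        have := congrArg (fun z => a⁻¹ * z) h
        simpa using this.symm
      exact hb1 this
    have hbab : b ≠ a * b := by
      intro h
      have : a = 1 := by
        have := congrArg (fun z => z * b⁻¹) h
        simpa using this.symm
      exact ha this
    refine ⟨{a, b, a * b}, isAtomSeq_of_min (by simp) ?_ ?_, by simp⟩
    · refine ⟨[a, b, a * b], rfl, ?_⟩
      simp only [List.prod_cons, List.prod_nil, mul_one]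
      rw [← mul_assoc]
      exact hsq (a * b)
    · intro T hTle hT0 hTS hT
      have hc3 : Multiset.card T ≤ 3 := by
        have := Multiset.card_le_card hTle
        simpa using this
      have hcne3 : Multiset.card T ≠ 3 := by
        intro h
        exact hTS (Multiset.eq_of_le_of_card_le hTle (by simp [h]))
      have hc1 : 1 ≤ Multiset.card T := by
        have := Multiset.card_pos.mpr hT0
        omega
      rcases (by omega : Multiset.card T = 1 ∨ Multiset.card T = 2) with h | h
      · obtain ⟨x, rfl⟩ := Multiset.card_eq_one.mp h
        have hx1 : x = 1 := prodOne_singleton.mp hT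
        have : x ∈ ({a, b, a * b} : Multiset G) := Multiset.mem_of_le hTle (by simp)
        rcases (by simpa using this : x = a ∨ x = b ∨ x = a * b) with rfl | rfl | rfl
        · exact ha hx1
        · exact hb1 hx1
        · exact hab1 hx1
      · obtain ⟨x, y, rfl⟩ := Multiset.card_eq_two.mp h
        have hxy : x * y = 1 := prodOne_pair.mp hT
        have hyx : y = x := (eq_inv_of_mul_eq_one_right hxy).trans (hinv x)
        rw [hyx] at hTle
        have hcnt : 2 ≤ Multiset.count x ({a, b, a * b} : Multiset G) := by
          calc 2 = Multiset.count x ({x, x} : Multiset G) := by simp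
            _ ≤ _ := Multiset.count_le_of_le x hTle
        have hcount : Multiset.count x ({a, b, a * b} : Multiset G) ≤ 1 := by
          by_cases h1 : x = a <;> by_cases h2 : x = b <;> by_cases h3 : x = a * b <;>
            simp_all [Multiset.insert_eq_cons, Multiset.count_cons, Multiset.count_singleton]
        omega

theorem card_msum {α : Type*} (f : Multiset (Multiset α)) :
    Multiset.card f.sum = (f.map Multiset.card).sum :=
  Multiset.card_join f

theorem three_le_dav [Finite G] (hG : 3 ≤ Nat.card G) : 3 ≤ Davenport G := by
  obtain ⟨S, hS, h3⟩ := exists_atom_big hG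
  calc 3 ≤ Multiset.card S := h3
    _ ≤ Davenport G := atom_card_le_dav hS

theorem exists_factorization (A : Multiset G) :
    IsProductOne A → ∃ f : Multiset (Multiset G), (∀ U ∈ f, IsAtomSeq U) ∧ f.sum = A := by
  induction A using Multiset.strongInductionOn with
  | _ A ih =>
    intro hA
    by_cases h0 : A = 0
    · exact ⟨0, by simp, by simp [h0]⟩
    by_cases hat : IsAtomSeq A
    · exact ⟨{A}, by simpa using hat, by simp⟩
    · have hdec : ∃ B C : Multiset G, A = B + C ∧ IsProductOne B ∧ IsProductOne C ∧
          ¬(B = 0 ∨ C = 0) := by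
        by_contra hcon
        push_neg at hcon
        exact hat ⟨h0, hA, hcon⟩
      obtain ⟨B, C, hBC, hB, hC, hnz⟩ := hdec
      push_neg at hnz
      have hBlt : B < A := lt_of_le_of_ne (hBC ▸ le_add_right B C)
        (fun h => hnz.2 (by rw [← h] at hBC; exact (left_eq_add).mp hBC))
      have hClt : C < A := lt_of_le_of_ne (hBC ▸ le_add_left C B)
        (fun h => hnz.1 (by rw [← h] at hBC; exact (right_eq_add).mp hBC))
      obtain ⟨fB, hfB, hfBs⟩ := ih B hBlt hB
      obtain ⟨fC, hfC, hfCs⟩ := ih C hClt hC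
      exact ⟨fB + fC, fun U hU => (Multiset.mem_add.mp hU).elim (hfB U) (hfC U),
        by rw [Multiset.sum_add, hfBs, hfCs, hBC]⟩

theorem mem_lengths {A : Multiset G} {k : ℕ} :
    k ∈ lengths A ↔ ∃ f : Multiset (Multiset G), Multiset.card f = k ∧
      (∀ U ∈ f, IsAtomSeq U) ∧ f.sum = A := by
  unfold lengths lengthsOn
  constructor
  · rintro ⟨f, h1, h2, h3⟩
    exact ⟨f, h1, fun U hU => (h2 U hU).2, h3⟩
  · rintro ⟨f, h1, h2, h3⟩
    exact ⟨f, h1, fun U hU => isAtomSeqOn_univ.mpr (h2 U hU), h3⟩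

theorem lengths_nonempty {A : Multiset G} (hA : IsProductOne A) : (lengths A).Nonempty := by
  obtain ⟨f, h1, h2⟩ := exists_factorization A hA
  exact ⟨Multiset.card f, mem_lengths.mpr ⟨f, rfl, h1, h2⟩⟩

theorem factor_bounds [Finite G] {A : Multiset G} {k : ℕ} (hk : k ∈ lengths A) :
    2 * k ≤ A.count 1 + Multiset.card A ∧
      Davenport G * A.count 1 + Multiset.card A ≤ Davenport G * k + A.count 1 ∧
      k ≤ Multiset.card A ∧ (A ≠ 0 → 0 < k) := by
  classical
  obtain ⟨f, hcardf, hfat, hfsum⟩ := mem_lengths.mp hk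
  set f₁ := f.filter (fun U => U = {1}) with hf1
  set f₂ := f.filter (fun U => ¬ U = {1}) with hf2
  have hsplit : f₁ + f₂ = f := Multiset.filter_add_not _ f
  have hk12 : Multiset.card f₁ + Multiset.card f₂ = k := by
    rw [← hcardf, ← hsplit]; simp
  have hf1rep : f₁ = Multiset.replicate (Multiset.card f₁) ({1} : Multiset G) := by
    rw [Multiset.eq_replicate_card]
    exact fun U hU => (Multiset.mem_filter.mp hU).2
  have hf1sum : f₁.sum = Multiset.replicate (Multiset.card f₁) (1 : G) := by
    conv_lhs => rw [hf1rep]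
    rw [Multiset.sum_replicate, Multiset.nsmul_singleton]
  have hAsum : A = f₁.sum + f₂.sum := by rw [← hfsum, ← hsplit, Multiset.sum_add]
  have h1f2 : ∀ U ∈ f₂, IsAtomSeq U ∧ U ≠ {1} := fun U hU =>
    ⟨hfat U (by rw [← hsplit]; exact Multiset.mem_add.mpr (Or.inr hU)),
      (Multiset.mem_filter.mp hU).2⟩
  have hcount2 : Multiset.count 1 f₂.sum = 0 := by
    rw [Multiset.count_eq_zero]
    intro hmem
    obtain ⟨U, hU, h1U⟩ := Multiset.mem_join.mp hmem
    obtain ⟨hUat, hUne⟩ := h1f2 U hU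
    exact hUne (atom_eq_of_one_mem hUat h1U)
  have hm : A.count 1 = Multiset.card f₁ := by
    rw [hAsum, Multiset.count_add, hcount2, hf1sum, Multiset.count_replicate_self, add_zero]
  have hn : Multiset.card A = Multiset.card f₁ + Multiset.card f₂.sum := by
    rw [hAsum, Multiset.card_add, hf1sum, Multiset.card_replicate]
  have hlow : 2 * Multiset.card f₂ ≤ Multiset.card f₂.sum := by
    have h2le : ∀ x ∈ f₂.map Multiset.card, 2 ≤ x := by
      intro x hx
      obtain ⟨U, hU, rfl⟩ := Multiset.mem_map.mp hx
      exact two_le_card_atom (h1f2 U hU).1 (h1f2 U hU).2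
    have hs := Multiset.card_nsmul_le_sum h2le
    rw [card_msum]
    simpa [Multiset.card_map, smul_eq_mul, mul_comm] using hs
  have hhigh : Multiset.card f₂.sum ≤ Davenport G * Multiset.card f₂ := by
    have hle : ∀ x ∈ f₂.map Multiset.card, x ≤ Davenport G := by
      intro x hx
      obtain ⟨U, hU, rfl⟩ := Multiset.mem_map.mp hx
      exact atom_card_le_dav (h1f2 U hU).1
    have hs := Multiset.sum_le_card_nsmul _ _ hle
    rw [card_msum]
    simpa [Multiset.card_map, smul_eq_mul, mul_comm] using hs
  refine ⟨by omega, ?_, by omega, ?_⟩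
  · have hDk : Davenport G * k
        = Davenport G * Multiset.card f₁ + Davenport G * Multiset.card f₂ := by
      rw [← hk12, Nat.mul_add]
    rw [hm, hn, hDk]
    linarith [hhigh]
  · intro hA0
    rcases Nat.eq_zero_or_pos k with h | h
    · exfalso
      have hf0 : f = 0 := Multiset.card_eq_zero.mp (by omega)
      exact hA0 (by rw [← hfsum, hf0, Multiset.sum_zero])
    · exact h

theorem lengths_bddAbove [Finite G] (A : Multiset G) : BddAbove (lengths A) :=
  ⟨Multiset.card A, fun _ hk => (factor_bounds hk).2.2.1⟩

theorem msum_nsmul {α : Type*} [AddCommMonoid α] (n : ℕ) (s : Multiset α) :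
    (n • s).sum = n • s.sum := by
  induction n with
  | zero => simp
  | succ k ih => rw [succ_nsmul, succ_nsmul, Multiset.sum_add, ih]

theorem lengths_zero {k : ℕ} (hk : k ∈ lengths (0 : Multiset G)) : k = 0 := by
  obtain ⟨f, hcard, hat, hsum⟩ := mem_lengths.mp hk
  have hf0 : f = 0 := by
    rw [Multiset.eq_zero_iff_forall_notMem]
    intro U hU
    exact (hat U hU).1 ((Multiset.sum_eq_zero_iff.mp hsum) U hU)
  rw [← hcard, hf0]
  rfl

theorem elasticity_bounds [Finite G] (hG : 3 ≤ Nat.card G) {A : Multiset G}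
    (hA : IsProductOne A) :
    1 ≤ elasticity (lengths A) ∧ elasticity (lengths A) ≤ (Davenport G : ℚ) / 2 := by
  have hD : 3 ≤ Davenport G := three_le_dav hG
  have hD2 : (1 : ℚ) ≤ (Davenport G : ℚ) / 2 := by
    rw [le_div_iff₀ (by norm_num : (0:ℚ) < 2)]
    have h3 : (3 : ℚ) ≤ (Davenport G : ℚ) := by exact_mod_cast hD
    linarith
  by_cases h0 : A = 0
  · subst h0
    have hempty : ¬ (lengths (0 : Multiset G) ∩ {k | 0 < k}).Nonempty := by
      rintro ⟨k, hk1, hk2⟩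
      have hzero := lengths_zero hk1
      have : 0 < k := hk2
      omega
    unfold elasticity
    rw [if_neg hempty]
    exact ⟨le_refl 1, hD2⟩
  · have hsub : lengths A ⊆ {k | 0 < k} := fun k hk => (factor_bounds hk).2.2.2 h0
    have hSeq : lengths A ∩ {k | 0 < k} = lengths A :=
      Set.inter_eq_self_of_subset_left hsub
    have hne0 : (lengths A).Nonempty := lengths_nonempty hA
    have hne : (lengths A ∩ {k | 0 < k}).Nonempty := by rw [hSeq]; exact hne0
    have hbdd : BddAbove (lengths A) := lengths_bddAbove A
    have hsupmem : sSup (lengths A) ∈ lengths A := Nat.sSup_mem hne0 hbdd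
    have hinfmem : sInf (lengths A) ∈ lengths A := Nat.sInf_mem hne0
    have hip : 0 < sInf (lengths A) := hsub hinfmem
    have hle : sInf (lengths A) ≤ sSup (lengths A) := le_csSup hbdd hinfmem
    obtain ⟨h1, -, -, -⟩ := factor_bounds hsupmem
    obtain ⟨-, h2, -, -⟩ := factor_bounds hinfmem
    have hmm : 2 * A.count 1 ≤ Davenport G * A.count 1 := by
      have h2D : 2 ≤ Davenport G := by omega
      exact Nat.mul_le_mul_right _ h2D
    have hkey : 2 * sSup (lengths A) ≤ Davenport G * sInf (lengths A) := by linarith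
    unfold elasticity
    rw [if_pos hne, hSeq]
    have hipQ : (0:ℚ) < ((sInf (lengths A) : ℕ) : ℚ) := by exact_mod_cast hip
    constructor
    · rw [le_div_iff₀ hipQ, one_mul]
      exact_mod_cast hle
    · rw [div_le_div_iff₀ hipQ (by norm_num : (0:ℚ) < 2)]
      have hfin : sSup (lengths A) * 2 ≤ Davenport G * sInf (lengths A) := by linarith
      exact_mod_cast hfin

theorem exists_seq_with_elasticity [Finite G] (hG : 3 ≤ Nat.card G) {q : ℚ}
    (h1 : 1 ≤ q) (h2 : q ≤ (Davenport G : ℚ) / 2) :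
    ∃ A : Multiset G, IsProductOne A ∧ q = elasticity (lengths A) := by
  classical
  obtain ⟨U, hU, hUD⟩ := davenport_spec G
  have hD : 3 ≤ Davenport G := three_le_dav hG
  set D := Davenport G with hDdef
  set a := q.num.toNat with hadef
  set b := q.den with hbdef
  have hq0 : 0 < q := lt_of_lt_of_le one_pos h1
  have hbpos : 0 < b := q.den_pos
  have hanum : ((a : ℤ) : ℚ) = (q.num : ℚ) := by
    rw [hadef]
    exact_mod_cast congrArg (Int.cast : ℤ → ℚ)
      (Int.toNat_of_nonneg (le_of_lt (Rat.num_pos.mpr hq0)))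
  have hq : (a : ℚ) / (b : ℚ) = q := by
    rw [show ((a:ℕ):ℚ) = ((a:ℤ):ℚ) by push_cast; ring, hanum, hbdef]
    exact Rat.num_div_den q
  have hbQ : (0:ℚ) < (b:ℚ) := by exact_mod_cast hbpos
  rw [← hq] at h1 h2
  have hba : b ≤ a := by
    rw [le_div_iff₀ hbQ, one_mul] at h1
    exact_mod_cast h1
  have h2ab : 2 * a ≤ D * b := by
    rw [div_le_div_iff₀ hbQ (by norm_num : (0:ℚ) < 2)] at h2
    have hcast : ((2 * a : ℕ):ℚ) ≤ ((D * b : ℕ):ℚ) := by push_cast; linarith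
    exact_mod_cast hcast
  set i := a - b with hidef
  set m := D * b - 2 * a with hmdef
  have hiQ : (i : ℚ) = (a : ℚ) - b := by rw [hidef, Nat.cast_sub hba]
  have hmQ : (m : ℚ) = (D : ℚ) * b - 2 * a := by
    rw [hmdef, Nat.cast_sub h2ab]
    push_cast
    ring
  have hU1 : (1 : G) ∉ U := one_not_mem_atom hU (by rw [hUD]; omega)
  set V := U.map (fun g => g⁻¹) with hVdef
  have hVat : IsAtomSeq V := atom_map_inv hU
  have hVcard : Multiset.card V = D := by rw [hVdef, Multiset.card_map, hUD]
  have hV1 : (1 : G) ∉ V := by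
    intro hmem
    obtain ⟨g, hg, hg1⟩ := Multiset.mem_map.mp hmem
    exact hU1 (by rwa [inv_eq_one.mp hg1] at hg)
  set A := i • (U + V) + Multiset.replicate m 1 with hAdef
  have hApo : IsProductOne A :=
    prodOne_add (prodOne_nsmul (prodOne_add hU.2.1 hVat.2.1) i) (prodOne_replicate_one m)
  have hcount : A.count 1 = m := by
    rw [hAdef, Multiset.count_add, Multiset.count_nsmul, Multiset.count_add,
      Multiset.count_eq_zero.mpr hU1, Multiset.count_eq_zero.mpr hV1,
      Multiset.count_replicate_self]
    simp
  have hcard : Multiset.card A = 2 * (D * i) + m := by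
    rw [hAdef, Multiset.card_add, Multiset.card_nsmul, Multiset.card_add, hUD, hVcard,
      Multiset.card_replicate]
    ring
  have hminmem : (m + 2 * i) ∈ lengths A := by
    rw [mem_lengths]
    refine ⟨Multiset.replicate i U + Multiset.replicate i V + Multiset.replicate m {1},
      ?_, ?_, ?_⟩
    · simp only [Multiset.card_add, Multiset.card_replicate]
      omega
    · intro W hW
      rcases Multiset.mem_add.mp hW with hW | hW
      · rcases Multiset.mem_add.mp hW with hW | hW
        · rw [Multiset.eq_of_mem_replicate hW]; exact hU
        · rw [Multiset.eq_of_mem_replicate hW]; exact hVat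
      · rw [Multiset.eq_of_mem_replicate hW]; exact atom_one
    · rw [Multiset.sum_add, Multiset.sum_add, Multiset.sum_replicate, Multiset.sum_replicate,
        Multiset.sum_replicate, Multiset.nsmul_singleton, hAdef, smul_add]
  have hW0 : (U.map fun g => ({g, g⁻¹} : Multiset G)).sum = U + V := by
    have hre : (U.map fun g => ({g, g⁻¹} : Multiset G))
        = U.map fun g => (({g} : Multiset G) + ({g⁻¹} : Multiset G)) := by
      apply Multiset.map_congr rfl
      intro g _
      simp [Multiset.singleton_add, Multiset.insert_eq_cons]
    rw [hre, Multiset.sum_map_add, Multiset.sum_map_singleton]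
    congr 1
    rw [show (fun g : G => ({g⁻¹} : Multiset G))
        = (fun x : G => ({x} : Multiset G)) ∘ (fun g : G => g⁻¹) from rfl,
      ← Multiset.map_map, Multiset.sum_map_singleton, hVdef]
  have hmaxmem : (m + D * i) ∈ lengths A := by
    rw [mem_lengths]
    refine ⟨i • (U.map fun g => ({g, g⁻¹} : Multiset G)) + Multiset.replicate m {1},
      ?_, ?_, ?_⟩
    · rw [Multiset.card_add, Multiset.card_nsmul, Multiset.card_map, hUD,
        Multiset.card_replicate]
      ring
    · intro W hW
      rcases Multiset.mem_add.mp hW with hW | hW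
      · obtain ⟨-, hW⟩ := Multiset.mem_nsmul.mp hW
        obtain ⟨g, hg, rfl⟩ := Multiset.mem_map.mp hW
        exact atom_pair (fun h => hU1 (h ▸ hg))
      · rw [Multiset.eq_of_mem_replicate hW]; exact atom_one
    · rw [Multiset.sum_add, msum_nsmul, hW0, Multiset.sum_replicate,
        Multiset.nsmul_singleton, hAdef]
  have h3b : 3 * b ≤ D * b := Nat.mul_le_mul_right b hD
  have hb1Q : (1:ℚ) ≤ (b:ℚ) := by exact_mod_cast hbpos
  have h3bQ : (3:ℚ) * b ≤ (D:ℚ) * b := by exact_mod_cast h3b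
  have hmi_pos : 0 < m + 2 * i := by
    rcases Nat.eq_zero_or_pos (m + 2 * i) with h | h
    · exfalso
      have hm0 : m = 0 := by omega
      have hi0 : i = 0 := by omega
      rw [hm0] at hmQ
      rw [hi0] at hiQ
      simp at hmQ hiQ
      linarith
    · exact h
  have hub : ∀ k ∈ lengths A, k ≤ m + D * i := by
    intro k hk
    obtain ⟨hb1, -, -, -⟩ := factor_bounds hk
    rw [hcount, hcard] at hb1
    linarith
  have hlb : ∀ k ∈ lengths A, m + 2 * i ≤ k := by
    intro k hk
    obtain ⟨-, hb2, -, -⟩ := factor_bounds hk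
    rw [hcount, hcard] at hb2
    have hmul : D * (m + 2 * i) = D * m + 2 * (D * i) := by ring
    have hDD : D * (m + 2 * i) ≤ D * k := by linarith
    exact Nat.le_of_mul_le_mul_left hDD (by omega : 0 < D)
  have hSeq : lengths A ∩ {k | 0 < k} = lengths A :=
    Set.inter_eq_self_of_subset_left (fun k hk => lt_of_lt_of_le hmi_pos (hlb k hk))
  have hne : (lengths A ∩ {k | 0 < k}).Nonempty := by
    rw [hSeq]
    exact ⟨_, hminmem⟩
  have hsup : sSup (lengths A ∩ {k | 0 < k}) = m + D * i := by
    rw [hSeq]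
    exact le_antisymm (csSup_le ⟨_, hminmem⟩ hub) (le_csSup (lengths_bddAbove A) hmaxmem)
  have hinf : sInf (lengths A ∩ {k | 0 < k}) = m + 2 * i := by
    rw [hSeq]
    exact le_antisymm (csInf_le (OrderBot.bddBelow _) hminmem) (le_csInf ⟨_, hminmem⟩ hlb)
  refine ⟨A, hApo, ?_⟩
  unfold elasticity
  rw [if_pos hne, hsup, hinf, ← hq]
  have hnum : ((m + D * i : ℕ) : ℚ) = ((D:ℚ) - 2) * a := by
    push_cast
    rw [hmQ, hiQ]
    ring
  have hden : ((m + 2 * i : ℕ) : ℚ) = ((D:ℚ) - 2) * b := by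
    push_cast
    rw [hmQ, hiQ]
    ring
  rw [hnum, hden]
  have hD2 : (D:ℚ) - 2 ≠ 0 := by
    have h3Q : (3:ℚ) ≤ (D:ℚ) := by exact_mod_cast hD
    exact ne_of_gt (by linarith)
  rw [mul_div_mul_left _ _ hD2]

end ProductOneAux

open ProductOne in
/-- Let `G` be a finite group with `|G| ≥ 3`. Then the set of
elasticities `{ρ(L(A)) : A ∈ B(G)}` equals `{q ∈ ℚ : 1 ≤ q ≤ D(G)/2}`. -/
theorem set_of_elasticities (G : Type*) [Group G] [Finite G] (hG : 3 ≤ Nat.card G) :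
    {q : ℚ | ∃ A : Multiset G, IsProductOne A ∧ q = elasticity (lengths A)} =
      {q : ℚ | 1 ≤ q ∧ q ≤ (Davenport G : ℚ) / 2} := by
  ext q
  simp only [Set.mem_setOf_eq]
  constructor
  · rintro ⟨A, hA, rfl⟩
    exact ProductOneAux.elasticity_bounds hG hA
  · rintro ⟨h1, h2⟩
    exact ProductOneAux.exists_seq_with_elasticity hG h1 h2
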